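/- The squared distance of the evolved state to its limit satisfies ‖ψ(t) − ψ(∞)‖² ≤ C e^{-2tΔ}/a³ for all t ≥ t₀, where ψ(∞) is the normalized projection of ψ(0) onto the ground eigenspace, a = ‖P₀ψ(0)‖², Δ is the energy gap, and C, t₀ are constants depending only on a. -/

import Mathlib

open NormedSpace Filter Topology
open scoped InnerProductSpace Nat

lemma exp_apply_eigen {V : Type*} [NormedAddCommGroup V] [InnerProductSpace ℂ V]
    [FiniteDimensional ℂ V] (A : V →L[ℂ] V) (c : ℂ) (v : V) (h : A v = c • v) :
    exp A v = Complex.exp c • v := by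
  have hpow : ∀ n : ℕ, (A ^ n) v = c ^ n • v := by
    intro n
    induction n with
    | zero => simp
    | succ n ih =>
      rw [pow_succ, ContinuousLinearMap.mul_apply, h, map_smul, ih,
        smul_smul, ← pow_succ']
  have hsum : Summable fun n : ℕ => (n !⁻¹ : ℂ) • A ^ n := expSeries_summable' A
  have h1 : exp A v = ∑' n : ℕ, ((n !⁻¹ : ℂ) • A ^ n) v := by
    rw [exp_eq_tsum (𝕂 := ℂ)]
    exact (ContinuousLinearMap.apply ℂ V v).map_tsum hsum
  rw [h1]
  have h2 : ∀ n : ℕ, ((n !⁻¹ : ℂ) • A ^ n) v = ((n !⁻¹ : ℂ) • c ^ n) • v := by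
    intro n
    rw [ContinuousLinearMap.smul_apply, hpow, smul_smul, smul_eq_mul]
  simp_rw [h2]
  rw [(expSeries_summable' (𝕂 := ℂ) c).tsum_smul_const]
  congr 1
  rw [Complex.exp_eq_exp_ℂ, exp_eq_tsum (𝕂 := ℂ)]

lemma normalize_dist {V : Type*} [NormedAddCommGroup V] [NormedSpace ℝ V]
    (x y : V) (hx : x ≠ 0) (hy : y ≠ 0) :
    ‖‖x‖⁻¹ • x - ‖y‖⁻¹ • y‖ ≤ 2 * ‖x - y‖ / ‖y‖ := by
  have hx' : (0:ℝ) < ‖x‖ := norm_pos_iff.mpr hx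
  have hy' : (0:ℝ) < ‖y‖ := norm_pos_iff.mpr hy
  have key : ‖x‖⁻¹ • x - ‖y‖⁻¹ • y = ‖y‖⁻¹ • (x - y) + (‖x‖⁻¹ - ‖y‖⁻¹) • x := by
    rw [smul_sub, sub_smul]
    abel
  rw [key]
  have h1 : ‖(‖y‖:ℝ)⁻¹ • (x - y)‖ = ‖x - y‖ / ‖y‖ := by
    rw [norm_smul, Real.norm_eq_abs, abs_of_pos (inv_pos.mpr hy'), inv_mul_eq_div]
  have h2 : ‖((‖x‖:ℝ)⁻¹ - ‖y‖⁻¹) • x‖ ≤ ‖x - y‖ / ‖y‖ := by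
    rw [norm_smul, Real.norm_eq_abs, inv_sub_inv hx'.ne' hy'.ne', abs_div,
      abs_of_pos (by positivity : (0:ℝ) < ‖x‖ * ‖y‖)]
    have habs : |‖y‖ - ‖x‖| ≤ ‖x - y‖ := by
      rw [← norm_sub_rev]
      exact abs_norm_sub_norm_le y x
    calc |‖y‖ - ‖x‖| / (‖x‖ * ‖y‖) * ‖x‖ = |‖y‖ - ‖x‖| / ‖y‖ := by
          field_simp
      _ ≤ ‖x - y‖ / ‖y‖ := by gcongr
  calc ‖‖y‖⁻¹ • (x - y) + (‖x‖⁻¹ - ‖y‖⁻¹) • x‖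
      ≤ ‖‖y‖⁻¹ • (x - y)‖ + ‖(‖x‖⁻¹ - ‖y‖⁻¹) • x‖ := norm_add_le _ _
    _ ≤ ‖x - y‖ / ‖y‖ + ‖x - y‖ / ‖y‖ := by rw [h1]; gcongr
    _ = 2 * ‖x - y‖ / ‖y‖ := by ring
set_option maxHeartbeats 1000000 in
theorem ite_convergence_rate
    {V : Type*} [NormedAddCommGroup V] [InnerProductSpace ℂ V] [FiniteDimensional ℂ V]
    (H : V →L[ℂ] V) (hH : IsSelfAdjoint H)
    (lam0 lamμ : ℝ)
    (h0 : Module.End.HasEigenvalue (H : V →ₗ[ℂ] V) (lam0 : ℂ))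
    (hμev : Module.End.HasEigenvalue (H : V →ₗ[ℂ] V) (lamμ : ℂ))
    (hgap : ∀ r : ℝ, Module.End.HasEigenvalue (H : V →ₗ[ℂ] V) (r : ℂ) →
      r = lam0 ∨ lamμ ≤ r)
    (Δ : ℝ) (hΔ : Δ = lamμ - lam0) (hΔpos : 0 < Δ)
    (P0 : V → V)
    (hP0 : ∀ v, P0 v =
      ((Module.End.eigenspace (H : V →ₗ[ℂ] V) (lam0 : ℂ)).orthogonalProjectionOnto v : V))
    (ψ0 : V) (hψ0 : ‖ψ0‖ = 1)
    (a : ℝ) (ha : a = ‖P0 ψ0‖ ^ 2) (hapos : 0 < a)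
    (ψ : ℝ → V)
    (hψ : ∀ t, ψ t = ‖exp ((-t : ℂ) • H) ψ0‖⁻¹ • (exp ((-t : ℂ) • H) ψ0))
    (ψinf : V) (hψinf : ψinf = ‖P0 ψ0‖⁻¹ • P0 ψ0) :
    ∃ C t0 : ℝ, 0 < C ∧ ∀ t ≥ t0,
      ‖ψ t - ψinf‖ ^ 2 ≤ C * Real.exp (-2 * t * Δ) / a ^ 3 := by
  have hsym : (H : V →ₗ[ℂ] V).IsSymmetric := hH.isSymmetric
  set E : Submodule ℂ V := Module.End.eigenspace (H : V →ₗ[ℂ] V) (lam0 : ℂ) with hE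
  set u : V := P0 ψ0 with hu
  have huval : u = (E.orthogonalProjectionOnto ψ0 : V) := hP0 ψ0
  have huE : u ∈ E := by rw [huval]; exact Submodule.coe_mem _
  have hHu : H u = (lam0 : ℂ) • u := Module.End.mem_eigenspace_iff.mp huE
  set w : V := ψ0 - u with hw
  have hwE : w ∈ Eᗮ := by
    rw [hw, huval]; exact E.sub_starProjection_mem_orthogonal ψ0
  have hinner : (inner ℂ u w : ℂ) = 0 := (Submodule.mem_orthogonal E w).mp hwE u huE
  have hnorm_u : ‖u‖ ^ 2 = a := ha.symm
  have hsa : Real.sqrt a = ‖u‖ := by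
    rw [← hnorm_u, Real.sqrt_sq (norm_nonneg u)]
  have hsqa : 0 < Real.sqrt a := Real.sqrt_pos.mpr hapos
  have hupos : 0 < ‖u‖ := by rw [← hsa]; exact hsqa
  have hune : u ≠ 0 := norm_pos_iff.mp hupos
  have hpyth : ‖u‖ ^ 2 + ‖w‖ ^ 2 = 1 := by
    have h1 : u + w = ψ0 := by rw [hw]; abel
    have h2 := norm_add_sq (𝕜 := ℂ) u w
    rw [h1, hψ0, hinner] at h2
    simp at h2
    linarith
  have ha1 : a ≤ 1 := by nlinarith [sq_nonneg ‖w‖]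
  -- eigenbasis
  have hdim : Module.finrank ℂ V = Module.finrank ℂ V := rfl
  set b := hsym.eigenvectorBasis hdim with hbdef
  set μ := hsym.eigenvalues hdim with hμdef
  have hbmem : ∀ i, μ i = lam0 → (inner ℂ (b i) w : ℂ) = 0 := by
    intro i hi
    have hbe : b i ∈ E := by
      have h3 := (hsym.hasEigenvector_eigenvectorBasis hdim i).1
      rw [← hμdef, hi] at h3
      exact h3
    exact (Submodule.mem_orthogonal E w).mp hwE (b i) hbe
  have hbig : ∀ i, μ i = lam0 ∨ lamμ ≤ μ i := fun i =>
    hgap (μ i) (hsym.hasEigenvalue_eigenvalues hdim i)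
  set K : ℝ := ∑ i, ‖(inner ℂ (b i) w : ℂ)‖ with hK
  have hKnn : 0 ≤ K := Finset.sum_nonneg fun i _ => norm_nonneg _
  -- real smul coercion
  have coe_smul : ∀ (r : ℝ) (v : V), ((r : ℂ)) • v = r • v := by
    intro r v
    rw [← Complex.coe_algebraMap, algebraMap_smul]
  -- key exp computation
  have key : ∀ (t s : ℝ) (v : V), H v = ((s : ℝ) : ℂ) • v →
      exp ((-t : ℂ) • H) v = Real.exp (-t * s) • v := by
    intro t s v hv
    have h1 : ((-t : ℂ) • H) v = ((-t * s : ℝ) : ℂ) • v := by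
      rw [ContinuousLinearMap.smul_apply, hv, smul_smul]
      norm_num
    rw [exp_apply_eigen _ _ _ h1, ← Complex.ofReal_exp, coe_smul]
  refine ⟨4 * K ^ 2 + 1, max 1 (Δ⁻¹ * Real.log (2 * (K + 1) / Real.sqrt a)),
    by positivity, ?_⟩
  intro t ht
  have ht1 : (1 : ℝ) ≤ t := le_trans (le_max_left _ _) ht
  have ht0 : 0 ≤ t := by linarith
  have hK1 : (0 : ℝ) < 2 * (K + 1) := by linarith
  have hexp_t : Real.exp (-(t * Δ)) ≤ Real.sqrt a / (2 * (K + 1)) := by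
    have hlog : Δ⁻¹ * Real.log (2 * (K + 1) / Real.sqrt a) ≤ t :=
      le_trans (le_max_right _ _) ht
    have h2 : Real.log (2 * (K + 1) / Real.sqrt a) ≤ t * Δ := by
      rw [inv_mul_eq_div, div_le_iff₀ hΔpos] at hlog
      linarith
    calc Real.exp (-(t * Δ)) ≤ Real.exp (-(Real.log (2 * (K + 1) / Real.sqrt a))) := by
          exact Real.exp_le_exp.mpr (by linarith)
      _ = (2 * (K + 1) / Real.sqrt a)⁻¹ := by
          rw [Real.exp_neg, Real.exp_log (div_pos hK1 hsqa)]
      _ = Real.sqrt a / (2 * (K + 1)) := by rw [inv_div]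
  -- per-t computations
  have hAu : exp ((-t : ℂ) • H) u = Real.exp (-t * lam0) • u := key t lam0 u hHu
  have hAbi : ∀ i, exp ((-t : ℂ) • H) (b i) = Real.exp (-t * μ i) • b i := fun i =>
    key t (μ i) (b i) (hsym.apply_eigenvectorBasis hdim i)
  have hw_expand : w = ∑ i, (inner ℂ (b i) w : ℂ) • b i := (b.sum_repr' w).symm
  have hr_eq : exp ((-t : ℂ) • H) w
      = ∑ i, (inner ℂ (b i) w : ℂ) • Real.exp (-t * μ i) • b i := by
    conv_lhs => rw [hw_expand]
    rw [map_sum]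
    exact Finset.sum_congr rfl fun i _ => by rw [map_smul, hAbi i]
  have hr_norm : ‖exp ((-t : ℂ) • H) w‖ ≤ K * Real.exp (-t * lamμ) := by
    rw [hr_eq, hK, Finset.sum_mul]
    refine le_trans (norm_sum_le _ _) (Finset.sum_le_sum fun i _ => ?_)
    rw [norm_smul, norm_smul, Real.norm_eq_abs, abs_of_pos (Real.exp_pos _),
      b.orthonormal.1 i, mul_one]
    rcases hbig i with hi | hi
    · rw [hbmem i hi]
      simp
    · have : Real.exp (-t * μ i) ≤ Real.exp (-t * lamμ) := by
        apply Real.exp_le_exp.mpr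
        nlinarith
      gcongr
  have hsum_expand : exp ((-t : ℂ) • H) ψ0
      = Real.exp (-t * lam0) • u + exp ((-t : ℂ) • H) w := by
    have h1 : ψ0 = u + w := by rw [hw]; abel
    conv_lhs => rw [h1]
    rw [map_add, hAu]
  set m : V := Real.exp (t * lam0) • exp ((-t : ℂ) • H) ψ0 with hm
  have hmu : m - u = Real.exp (t * lam0) • exp ((-t : ℂ) • H) w := by
    rw [hm, hsum_expand, smul_add, smul_smul, ← Real.exp_add,
      show t * lam0 + -t * lam0 = 0 by ring, Real.exp_zero, one_smul]
    abel
  have hmru : ‖m - u‖ ≤ K * Real.exp (-(t * Δ)) := by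
    rw [hmu, norm_smul, Real.norm_eq_abs, abs_of_pos (Real.exp_pos _)]
    calc Real.exp (t * lam0) * ‖exp ((-t : ℂ) • H) w‖
        ≤ Real.exp (t * lam0) * (K * Real.exp (-t * lamμ)) := by
          gcongr
      _ = K * Real.exp (-(t * Δ)) := by
          rw [hΔ, mul_left_comm, ← Real.exp_add]
          congr 2
          ring
  have hsmall : K * Real.exp (-(t * Δ)) ≤ Real.sqrt a / 2 := by
    calc K * Real.exp (-(t * Δ)) ≤ K * (Real.sqrt a / (2 * (K + 1))) := by gcongr
      _ = K * Real.sqrt a / (2 * (K + 1)) := by ring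
      _ ≤ Real.sqrt a / 2 := by
          rw [div_le_div_iff₀ hK1 (by norm_num : (0:ℝ) < 2)]
          nlinarith [hsqa.le]
  have hmnorm : Real.sqrt a / 2 ≤ ‖m‖ := by
    have h1 : ‖u‖ - ‖m‖ ≤ ‖u - m‖ := norm_sub_norm_le u m
    rw [norm_sub_rev] at h1
    have h2 : ‖m - u‖ ≤ Real.sqrt a / 2 := le_trans hmru hsmall
    rw [← hsa] at *
    linarith
  have hmpos : 0 < ‖m‖ := lt_of_lt_of_le (by positivity) hmnorm
  have hmne : m ≠ 0 := norm_pos_iff.mp hmpos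
  have hψt : ψ t = ‖m‖⁻¹ • m := by
    rw [hψ t, hm, norm_smul, Real.norm_eq_abs, abs_of_pos (Real.exp_pos _),
      mul_inv, smul_smul, mul_right_comm, inv_mul_cancel₀ (Real.exp_ne_zero _), one_mul]
  have hdist : ‖ψ t - ψinf‖ ≤ 2 * (K * Real.exp (-(t * Δ))) / Real.sqrt a := by
    rw [hsa]
    calc ‖ψ t - ψinf‖ ≤ 2 * ‖m - u‖ / ‖u‖ := by
          rw [hψt, hψinf]
          exact normalize_dist m u hmne hune
      _ ≤ 2 * (K * Real.exp (-(t * Δ))) / ‖u‖ := by gcongr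
  calc ‖ψ t - ψinf‖ ^ 2 ≤ (2 * (K * Real.exp (-(t * Δ))) / Real.sqrt a) ^ 2 :=
        pow_le_pow_left₀ (norm_nonneg _) hdist 2
    _ = 4 * K ^ 2 * Real.exp (-2 * t * Δ) / a := by
        rw [div_pow, Real.sq_sqrt hapos.le, mul_pow, mul_pow, ← Real.exp_nat_mul]
        norm_num
        rw [show -(2 * (t * Δ)) = -2 * t * Δ by ring]
        ring
    _ ≤ (4 * K ^ 2 + 1) * Real.exp (-2 * t * Δ) / a ^ 3 := by
        apply div_le_div₀ (by positivity) ?_ (by positivity) ?_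
        · nlinarith [Real.exp_pos (-2 * t * Δ)]
        · nlinarith [mul_nonneg (mul_nonneg hapos.le (sub_nonneg.mpr ha1))
            (by linarith : (0:ℝ) ≤ 1 + a)]
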